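/- If x, y ∈ \overline\nabla_\infty satisfy ∑_{i=1}^∞ x_i^m = ∑_{i=1}^∞ y_i^m for every integer m ≥ 2, then x = y. -/

import Mathlib

/-- The Kingman simplex: nonincreasing nonnegative sequences with sum at most 1. -/
def KingmanSimplex : Set (ℕ → ℝ) :=
  {x | (∀ i, x (i + 1) ≤ x i) ∧ (∀ i, 0 ≤ x i) ∧ Summable x ∧ ∑' i, x i ≤ 1}

lemma KingmanSimplex.antitone {x : ℕ → ℝ} (hx : x ∈ KingmanSimplex) : Antitone x :=
  antitone_nat_of_succ_le hx.1

lemma KingmanSimplex.le_one {x : ℕ → ℝ} (hx : x ∈ KingmanSimplex) (i : ℕ) : x i ≤ 1 := by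
  refine le_trans ?_ hx.2.2.2
  exact Summable.le_tsum hx.2.2.1 i (fun j _ => hx.2.1 j)

lemma KingmanSimplex.summable_pow {x : ℕ → ℝ} (hx : x ∈ KingmanSimplex) (m : ℕ) (hm : 1 ≤ m) :
    Summable (fun i => x i ^ m) := by
  refine Summable.of_nonneg_of_le (fun i => pow_nonneg (hx.2.1 i) m)
    (fun i => ?_) hx.2.2.1
  calc x i ^ m ≤ x i ^ 1 := pow_le_pow_of_le_one (hx.2.1 i) (KingmanSimplex.le_one hx i) hm
    _ = x i := pow_one _

/-- Tail bound: the power sum is at most the head plus `y k ^ (m-1)`. -/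
lemma tail_bound {y : ℕ → ℝ} (hy : y ∈ KingmanSimplex) (k m : ℕ) (hm : 2 ≤ m) :
    ∑' i, y i ^ m ≤ (∑ i ∈ Finset.range k, y i ^ m) + y k ^ (m - 1) := by
  have hsum := KingmanSimplex.summable_pow hy m (by omega)
  have hsplit := Summable.sum_add_tsum_nat_add (f := fun i => y i ^ m) k hsum
  rw [← hsplit]
  gcongr
  -- bound the tail
  have htail_sum : Summable (fun i => y (i + k)) := (summable_nat_add_iff k).2 hy.2.2.1
  have h1 : ∑' i, y (i + k) ^ m ≤ ∑' i, y k ^ (m - 1) * y (i + k) := by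
    refine Summable.tsum_le_tsum (fun i => ?_) ((summable_nat_add_iff k).2 hsum)
      (htail_sum.mul_left _)
    have hle : y (i + k) ≤ y k := KingmanSimplex.antitone hy (Nat.le_add_left k i)
    have h0 : 0 ≤ y (i + k) := hy.2.1 _
    calc y (i + k) ^ m = y (i + k) ^ (m - 1) * y (i + k) := by
          rw [← pow_succ]; congr 1; omega
      _ ≤ y k ^ (m - 1) * y (i + k) := by
          gcongr
  have h2 : ∑' i, y k ^ (m - 1) * y (i + k) = y k ^ (m - 1) * ∑' i, y (i + k) :=
    tsum_mul_left
  have h3 : ∑' i, y (i + k) ≤ 1 := by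
    have := Summable.sum_add_tsum_nat_add (f := y) k hy.2.2.1
    have hnn : 0 ≤ ∑ i ∈ Finset.range k, y i :=
      Finset.sum_nonneg fun i _ => hy.2.1 i
    nlinarith [hy.2.2.2]
  have h4 : 0 ≤ y k ^ (m - 1) := pow_nonneg (hy.2.1 k) _
  calc ∑' i, y (i + k) ^ m ≤ y k ^ (m - 1) * ∑' i, y (i + k) := h1.trans_eq h2
    _ ≤ y k ^ (m - 1) * 1 := by gcongr
    _ = y k ^ (m - 1) := mul_one _

/-- If `0 ≤ b < a ≤ 1` then for some `m ≥ 2`, `b ^ (m-1) < a ^ m`. -/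
lemma exists_pow_lt_aux {a b : ℝ} (hb : 0 ≤ b) (hba : b < a) (ha1 : a ≤ 1) :
    ∃ m, 2 ≤ m ∧ b ^ (m - 1) < a ^ m := by
  have ha : 0 < a := lt_of_le_of_lt hb hba
  have hr0 : 0 ≤ b / a := div_nonneg hb ha.le
  have hr1 : b / a < 1 := (div_lt_one ha).2 hba
  have htend := tendsto_pow_atTop_nhds_zero_of_lt_one hr0 hr1
  have hev : ∀ᶠ n in Filter.atTop, (b / a) ^ n < a :=
    htend.eventually_lt_const ha
  obtain ⟨n, hn1, hn2⟩ := (hev.and (Filter.eventually_ge_atTop 1)).exists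
  refine ⟨n + 1, by omega, ?_⟩
  have key : b ^ n < a ^ (n + 1) := by
    have h1 : (b / a) ^ n * a ^ n < a * a ^ n := by
      have : (0:ℝ) < a ^ n := pow_pos ha n
      nlinarith
    have h2 : (b / a) ^ n * a ^ n = b ^ n := by
      rw [div_pow]
      field_simp
    rw [h2] at h1
    calc b ^ n < a * a ^ n := h1
      _ = a ^ (n + 1) := by ring
  simpa using key

/-- Key lemma: if x and y agree below k and `y k < x k`, some power sum of x is larger. -/
lemma key_lemma {x y : ℕ → ℝ} (hx : x ∈ KingmanSimplex) (hy : y ∈ KingmanSimplex)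
    (k : ℕ) (hk : ∀ i < k, x i = y i) (hlt : y k < x k) :
    ∃ m, 2 ≤ m ∧ ∑' i, y i ^ m < ∑' i, x i ^ m := by
  obtain ⟨m, hm2, hpow⟩ := exists_pow_lt_aux (hy.2.1 k) hlt (KingmanSimplex.le_one hx k)
  refine ⟨m, hm2, ?_⟩
  have hxsum := KingmanSimplex.summable_pow hx m (by omega)
  have hlow : (∑ i ∈ Finset.range (k + 1), x i ^ m) ≤ ∑' i, x i ^ m :=
    Summable.sum_le_tsum _ (fun i _ => pow_nonneg (hx.2.1 i) m) hxsum
  have heq : ∑ i ∈ Finset.range k, x i ^ m = ∑ i ∈ Finset.range k, y i ^ m := by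
    refine Finset.sum_congr rfl fun i hi => ?_
    rw [hk i (Finset.mem_range.1 hi)]
  calc ∑' i, y i ^ m ≤ (∑ i ∈ Finset.range k, y i ^ m) + y k ^ (m - 1) :=
        tail_bound hy k m hm2
    _ < (∑ i ∈ Finset.range k, x i ^ m) + x k ^ m := by rw [heq]; linarith
    _ = ∑ i ∈ Finset.range (k + 1), x i ^ m := (Finset.sum_range_succ _ _).symm
    _ ≤ ∑' i, x i ^ m := hlow

/-- The power sums `φ_m`, `m = 2, 3, …`, separate points of the Kingman simplex. -/
theorem power_sums_separate_points (x y : ℕ → ℝ)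
    (hx : x ∈ KingmanSimplex) (hy : y ∈ KingmanSimplex)
    (h : ∀ m : ℕ, 2 ≤ m → ∑' i, x i ^ m = ∑' i, y i ^ m) :
    x = y := by
  by_contra hne
  have hex : ∃ k, x k ≠ y k := by
    by_contra hall
    push_neg at hall
    exact hne (funext hall)
  classical
  set k := Nat.find hex with hkdef
  have hk : x k ≠ y k := Nat.find_spec hex
  have hkmin : ∀ i < k, x i = y i := fun i hi =>
    not_not.1 (Nat.find_min hex hi)
  rcases lt_or_gt_of_ne hk with hlt | hgt
  · obtain ⟨m, hm2, hm⟩ := key_lemma hy hx k (fun i hi => (hkmin i hi).symm) hlt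
    exact absurd (h m hm2) (by linarith)
  · obtain ⟨m, hm2, hm⟩ := key_lemma hx hy k hkmin hgt
    exact absurd (h m hm2) (by linarith)
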